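/- Let a = p₁²/(u₁−u₂) + p₂²/(u₂−u₁) − u₁² − u₁u₂ − u₂², and define x₃ = ((p₁−p₂)/(u₁−u₂))² − u₁ − u₂ and y₃ = p₁ + ((p₁−p₂)/(u₁−u₂))·(x₃ − u₁) on the open set {u₁ ≠ u₂} ⊂ ℝ⁴. Then {a, x₃} = 0 and {a, y₃} = 0 with respect to the canonical Poisson bracket; i.e. x₃ and y₃ are additional first integrals of the Hamiltonian system with Hamiltonian H = a. -/

import Mathlib

/-- The canonical Poisson bracket on `ℝ⁴` with coordinates `(u₁,u₂,p₁,p₂)`. -/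
noncomputable def poissonBracket (f g : ℝ → ℝ → ℝ → ℝ → ℝ) (u₁ u₂ p₁ p₂ : ℝ) : ℝ :=
    deriv (fun x => f x u₂ p₁ p₂) u₁ * deriv (fun y => g u₁ u₂ y p₂) p₁
  + deriv (fun x => f u₁ x p₁ p₂) u₂ * deriv (fun y => g u₁ u₂ p₁ y) p₂
  - deriv (fun y => f u₁ u₂ y p₂) p₁ * deriv (fun x => g x u₂ p₁ p₂) u₁
  - deriv (fun y => f u₁ u₂ p₁ y) p₂ * deriv (fun x => g u₁ x p₁ p₂) u₂

/-- Hamiltonian `a` of the separated Weierstrass system. -/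
noncomputable def aFun (x₁ x₂ y₁ y₂ : ℝ) : ℝ :=
  y₁ ^ 2 / (x₁ - x₂) + y₂ ^ 2 / (x₂ - x₁) - x₁ ^ 2 - x₁ * x₂ - x₂ ^ 2

/-- Abscissa of the third intersection point of the chord with the cubic. -/
noncomputable def x₃Fun (x₁ x₂ y₁ y₂ : ℝ) : ℝ :=
  ((y₁ - y₂) / (x₁ - x₂)) ^ 2 - x₁ - x₂

/-- Ordinate of the third intersection point of the chord with the cubic. -/
noncomputable def y₃Fun (x₁ x₂ y₁ y₂ : ℝ) : ℝ :=
  y₁ + ((y₁ - y₂) / (x₁ - x₂)) * (x₃Fun x₁ x₂ y₁ y₂ - x₁)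

section derivs
variable (u₁ u₂ p₁ p₂ : ℝ)

lemma da_u1 (h : u₁ - u₂ ≠ 0) :
    deriv (fun x => aFun x u₂ p₁ p₂) u₁
      = (p₂ ^ 2 - p₁ ^ 2) / (u₁ - u₂) ^ 2 - 2 * u₁ - u₂ := by
  have h' : u₂ - u₁ ≠ 0 := fun H => h (by linarith)
  have H := ((((hasDerivAt_const u₁ (p₁ ^ 2)).div ((hasDerivAt_id u₁).sub_const u₂) h).add
      ((hasDerivAt_const u₁ (p₂ ^ 2)).div ((hasDerivAt_const u₁ u₂).sub (hasDerivAt_id u₁)) h')).sub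
      (hasDerivAt_pow 2 u₁)).sub ((hasDerivAt_id u₁).mul_const u₂) |>.sub_const (u₂ ^ 2)
  exact H.deriv.trans (by simp only [id_eq, Pi.div_apply, Pi.sub_apply, Pi.pow_apply, Pi.add_apply, Pi.mul_apply]; push_cast; field_simp; ring)

lemma da_u2 (h : u₁ - u₂ ≠ 0) :
    deriv (fun x => aFun u₁ x p₁ p₂) u₂
      = (p₁ ^ 2 - p₂ ^ 2) / (u₁ - u₂) ^ 2 - u₁ - 2 * u₂ := by
  have h' : u₂ - u₁ ≠ 0 := fun H => h (by linarith)
  have H := ((((hasDerivAt_const u₂ (p₁ ^ 2)).div ((hasDerivAt_const u₂ u₁).sub (hasDerivAt_id u₂)) h).add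
      ((hasDerivAt_const u₂ (p₂ ^ 2)).div ((hasDerivAt_id u₂).sub_const u₁) h')).sub_const (u₁ ^ 2)).sub
      ((hasDerivAt_id u₂).const_mul u₁) |>.sub (hasDerivAt_pow 2 u₂)
  exact H.deriv.trans (by simp only [id_eq, Pi.div_apply, Pi.sub_apply, Pi.pow_apply, Pi.add_apply, Pi.mul_apply]; push_cast; field_simp; ring)

lemma da_p1 (h : u₁ - u₂ ≠ 0) :
    deriv (fun y => aFun u₁ u₂ y p₂) p₁ = 2 * p₁ / (u₁ - u₂) := by
  have H := ((hasDerivAt_pow 2 p₁).div_const (u₁ - u₂)).add_const (p₂ ^ 2 / (u₂ - u₁))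
      |>.sub_const (u₁ ^ 2) |>.sub_const (u₁ * u₂) |>.sub_const (u₂ ^ 2)
  exact H.deriv.trans (by push_cast; field_simp)

lemma da_p2 (h : u₁ - u₂ ≠ 0) :
    deriv (fun y => aFun u₁ u₂ p₁ y) p₂ = -(2 * p₂) / (u₁ - u₂) := by
  have h' : u₂ - u₁ ≠ 0 := fun H => h (by linarith)
  have H := ((hasDerivAt_pow 2 p₂).div_const (u₂ - u₁)).const_add (p₁ ^ 2 / (u₁ - u₂))
      |>.sub_const (u₁ ^ 2) |>.sub_const (u₁ * u₂) |>.sub_const (u₂ ^ 2)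
  exact H.deriv.trans (by push_cast; field_simp; ring)

lemma dx_u1 (h : u₁ - u₂ ≠ 0) :
    deriv (fun x => x₃Fun x u₂ p₁ p₂) u₁
      = -(2 * (p₁ - p₂) ^ 2) / (u₁ - u₂) ^ 3 - 1 := by
  have H := (((hasDerivAt_const u₁ (p₁ - p₂)).div ((hasDerivAt_id u₁).sub_const u₂) h).pow 2).sub
      (hasDerivAt_id u₁) |>.sub_const u₂
  exact H.deriv.trans (by simp only [id_eq, Pi.div_apply, Pi.sub_apply, Pi.pow_apply, Pi.add_apply, Pi.mul_apply]; push_cast; field_simp; ring)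

lemma dx_u2 (h : u₁ - u₂ ≠ 0) :
    deriv (fun x => x₃Fun u₁ x p₁ p₂) u₂
      = 2 * (p₁ - p₂) ^ 2 / (u₁ - u₂) ^ 3 - 1 := by
  have H := (((hasDerivAt_const u₂ (p₁ - p₂)).div ((hasDerivAt_const u₂ u₁).sub (hasDerivAt_id u₂)) h).pow 2).sub_const
      u₁ |>.sub (hasDerivAt_id u₂)
  exact H.deriv.trans (by simp only [id_eq, Pi.div_apply, Pi.sub_apply, Pi.pow_apply, Pi.add_apply, Pi.mul_apply]; push_cast; field_simp; ring)

lemma dx_p1 (h : u₁ - u₂ ≠ 0) :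
    deriv (fun y => x₃Fun u₁ u₂ y p₂) p₁
      = 2 * (p₁ - p₂) / (u₁ - u₂) ^ 2 := by
  have H := ((((hasDerivAt_id p₁).sub_const p₂).div_const (u₁ - u₂)).pow 2).sub_const u₁
      |>.sub_const u₂
  exact H.deriv.trans (by simp only [id_eq, Pi.div_apply, Pi.sub_apply, Pi.pow_apply, Pi.add_apply, Pi.mul_apply, pow_one]; push_cast; field_simp)

lemma dx_p2 (h : u₁ - u₂ ≠ 0) :
    deriv (fun y => x₃Fun u₁ u₂ p₁ y) p₂
      = -(2 * (p₁ - p₂)) / (u₁ - u₂) ^ 2 := by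
  have H := ((((hasDerivAt_const p₂ p₁).sub (hasDerivAt_id p₂)).div_const (u₁ - u₂)).pow 2).sub_const u₁
      |>.sub_const u₂
  exact H.deriv.trans (by simp only [id_eq, Pi.div_apply, Pi.sub_apply, Pi.pow_apply, Pi.add_apply, Pi.mul_apply, pow_one]; push_cast; field_simp; ring)

lemma dy_u1 (h : u₁ - u₂ ≠ 0) :
    deriv (fun x => y₃Fun x u₂ p₁ p₂) u₁
      = -(3 * (p₁ - p₂) ^ 3) / (u₁ - u₂) ^ 4 - 2 * (p₁ - p₂) / (u₁ - u₂)
        + (2 * u₁ + u₂) * (p₁ - p₂) / (u₁ - u₂) ^ 2 := by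
  have hs := (hasDerivAt_const u₁ (p₁ - p₂)).div ((hasDerivAt_id u₁).sub_const u₂) h
  have hinner := ((hs.pow 2).sub (hasDerivAt_id u₁)).sub_const u₂ |>.sub (hasDerivAt_id u₁)
  have H := (hs.mul hinner).const_add p₁
  exact H.deriv.trans (by simp only [id_eq, Pi.div_apply, Pi.sub_apply, Pi.pow_apply, Pi.add_apply, Pi.mul_apply]; push_cast; field_simp; ring)

lemma dy_u2 (h : u₁ - u₂ ≠ 0) :
    deriv (fun x => y₃Fun u₁ x p₁ p₂) u₂
      = 3 * (p₁ - p₂) ^ 3 / (u₁ - u₂) ^ 4 - (p₁ - p₂) / (u₁ - u₂)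
        - (2 * u₁ + u₂) * (p₁ - p₂) / (u₁ - u₂) ^ 2 := by
  have hs := (hasDerivAt_const u₂ (p₁ - p₂)).div ((hasDerivAt_const u₂ u₁).sub (hasDerivAt_id u₂)) h
  have hinner := ((hs.pow 2).sub_const u₁).sub (hasDerivAt_id u₂) |>.sub_const u₁
  have H := (hs.mul hinner).const_add p₁
  exact H.deriv.trans (by simp only [id_eq, Pi.div_apply, Pi.sub_apply, Pi.pow_apply, Pi.add_apply, Pi.mul_apply]; push_cast; field_simp; ring)

lemma dy_p1 (h : u₁ - u₂ ≠ 0) :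
    deriv (fun y => y₃Fun u₁ u₂ y p₂) p₁
      = 1 + 3 * (p₁ - p₂) ^ 2 / (u₁ - u₂) ^ 3 - (2 * u₁ + u₂) / (u₁ - u₂) := by
  have hs := ((hasDerivAt_id p₁).sub_const p₂).div_const (u₁ - u₂)
  have hinner := ((hs.pow 2).sub_const u₁).sub_const u₂ |>.sub_const u₁
  have H := (hasDerivAt_id p₁).add (hs.mul hinner)
  exact H.deriv.trans (by simp only [id_eq, Pi.div_apply, Pi.sub_apply, Pi.pow_apply, Pi.add_apply, Pi.mul_apply]; push_cast; field_simp; ring)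

lemma dy_p2 (h : u₁ - u₂ ≠ 0) :
    deriv (fun y => y₃Fun u₁ u₂ p₁ y) p₂
      = -(3 * (p₁ - p₂) ^ 2) / (u₁ - u₂) ^ 3 + (2 * u₁ + u₂) / (u₁ - u₂) := by
  have hs := ((hasDerivAt_const p₂ p₁).sub (hasDerivAt_id p₂)).div_const (u₁ - u₂)
  have hinner := ((hs.pow 2).sub_const u₁).sub_const u₂ |>.sub_const u₁
  have H := (hs.mul hinner).const_add p₁
  exact H.deriv.trans (by simp only [id_eq, Pi.div_apply, Pi.sub_apply, Pi.pow_apply, Pi.add_apply, Pi.mul_apply]; push_cast; field_simp; ring)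

end derivs

/-- `x₃` and `y₃` are additional first integrals of the Hamiltonian system with
Hamiltonian `H = a`: both Poisson brackets with `a` vanish on `{u₁ ≠ u₂}`. -/
theorem x₃_y₃_first_integrals (u₁ u₂ p₁ p₂ : ℝ) (h : u₁ ≠ u₂) :
    poissonBracket aFun x₃Fun u₁ u₂ p₁ p₂ = 0 ∧
    poissonBracket aFun y₃Fun u₁ u₂ p₁ p₂ = 0 := by
  have hd : u₁ - u₂ ≠ 0 := sub_ne_zero_of_ne h
  constructor <;>
  · simp only [poissonBracket, da_u1 _ _ _ _ hd, da_u2 _ _ _ _ hd, da_p1 _ _ _ _ hd,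
      da_p2 _ _ _ _ hd, dx_u1 _ _ _ _ hd, dx_u2 _ _ _ _ hd, dx_p1 _ _ _ _ hd,
      dx_p2 _ _ _ _ hd, dy_u1 _ _ _ _ hd, dy_u2 _ _ _ _ hd, dy_p1 _ _ _ _ hd,
      dy_p2 _ _ _ _ hd]
    field_simp
    ring
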